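/- arXiv:0710.2051 — 5 statements merged into one kernel-verified Lean document; each statement's English description precedes it below -/
import Mathlib

section
/- Let A and B be 2×2 real matrices with det A = det B = 1, A ∉ {1, −1} and B ∉ {1, −1} (i.e. A and B are non-identity elements of PSL(2,ℝ)). Then the following are equivalent: (i) A·B = B·A or A·B = −B·A (i.e. A and B commute in PSL(2,ℝ)); (ii) A and B have exactly the same eigenvectors over ℂ, i.e. for every vector v ∈ ℂ², there exists μ ∈ ℂ with (A viewed as a complex matrix)·v = μ·v if and only if there exists ν ∈ ℂ with (B viewed as a complex matrix)·v = ν·v. In words: two non-identity elements of PSL(2,ℝ) commute if and only if they have the same fixed points. -/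
lemma ch2' (a b c d : ℝ) (h : a * d - b * c = 1) :
    !![a, b; c, d] * !![a, b; c, d] = (a + d) • !![a, b; c, d] - 1 := by
  ext i j
  fin_cases i <;> fin_cases j <;>
    simp [Matrix.mul_apply, Fin.sum_univ_two, Matrix.one_apply] <;>
    first | linear_combination -h | ring

lemma ch2 (A : Matrix (Fin 2) (Fin 2) ℝ) (hA : A.det = 1) :
    A * A = (A 0 0 + A 1 1) • A - 1 := by
  have h := ch2' (A 0 0) (A 0 1) (A 1 0) (A 1 1)
    (by rw [Matrix.det_fin_two] at hA; linarith)
  rw [← Matrix.eta_fin_two A] at h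
  exact h

lemma trace_zero_of_anti (A B : Matrix (Fin 2) (Fin 2) ℝ)
    (hA : A.det = 1) (hB : B.det = 1) (hAnti : A * B = -(B * A)) :
    A 0 0 + A 1 1 = 0 := by
  have hBA : (B * A).det = 1 := by rw [Matrix.det_mul, hA, hB]; ring
  have hBAne : B * A ≠ 0 := by
    intro h0; rw [h0] at hBA; simp at hBA
  have h1 : A * A * B = B * (A * A) := by
    calc A * A * B = A * (A * B) := by rw [mul_assoc]
      _ = A * (-(B * A)) := by rw [hAnti]
      _ = -(A * B) * A := by noncomm_ring
      _ = (B * A) * A := by rw [hAnti]; noncomm_ring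
      _ = B * (A * A) := by rw [mul_assoc]
  rw [ch2 A hA] at h1
  set s := A 0 0 + A 1 1 with hs
  have h2 : s • (A * B) - B = s • (B * A) - B := by
    simpa [Matrix.sub_mul, Matrix.mul_sub, Matrix.smul_mul, Matrix.mul_smul] using h1
  have h3 : s • (A * B) = s • (B * A) := sub_left_inj.mp h2
  rw [hAnti, smul_neg, neg_eq_iff_add_eq_zero, ← add_smul] at h3
  rcases smul_eq_zero.mp h3 with h | h
  · linarith
  · exact absurd h hBAne

lemma anti_impossible (A B : Matrix (Fin 2) (Fin 2) ℝ)
    (hA : A.det = 1) (hB : B.det = 1) (hAnti : A * B = -(B * A)) : False := by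
  have tA := trace_zero_of_anti A B hA hB hAnti
  have tB := trace_zero_of_anti B A hB hA (by rw [hAnti, neg_neg])
  have h00 : (A * B) 0 0 = (-(B * A)) 0 0 := by rw [hAnti]
  simp [Matrix.mul_apply, Fin.sum_univ_two, Matrix.neg_apply] at h00
  rw [Matrix.det_fin_two] at hA hB
  set a := A 0 0; set b := A 0 1; set c := A 1 0
  set e := B 0 0; set f := B 0 1; set g := B 1 0
  have hg1 : a ^ 2 + b * c + 1 = 0 := by linear_combination -hA + a * tA
  have hg2 : e ^ 2 + f * g + 1 = 0 := by linear_combination -hB + e * tB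
  have hg3 : 2 * a * e + b * g + c * f = 0 := by linear_combination h00
  have key : 1 + a ^ 2 + e ^ 2 + ((b + c) / 2) ^ 2 + ((f + g) / 2) ^ 2
      + (a * ((f + g) / 2) - e * ((b + c) / 2)) ^ 2 = 0 := by
    linear_combination (((f - g) / 2) ^ 2 + (e ^ 2 + f * g + 1)) * hg1
      + ((b - c) / 2) ^ 2 * hg2
      + (-((b - c) / 2) * ((f - g) / 2) - (2 * a * e + b * g + c * f) / 4) * hg3
  nlinarith [sq_nonneg a, sq_nonneg e, sq_nonneg ((b + c) / 2), sq_nonneg ((f + g) / 2),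
    sq_nonneg (a * ((f + g) / 2) - e * ((b + c) / 2))]

-- nonscalar
lemma nonscalar (A : Matrix (Fin 2) (Fin 2) ℝ) (hA : A.det = 1)
    (h1 : A ≠ 1) (h1' : A ≠ -1) :
    ¬(A 0 1 = 0 ∧ A 1 0 = 0 ∧ A 0 0 - A 1 1 = 0) := by
  rintro ⟨hb, hc, had⟩
  rw [Matrix.det_fin_two, hb, hc] at hA
  have had' : A 1 1 = A 0 0 := by linarith
  rw [had'] at hA
  rcases mul_self_eq_one_iff.mp (by linarith : A 0 0 * A 0 0 = 1) with h | h
  · apply h1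
    rw [Matrix.eta_fin_two A, hb, hc, had', h]
    ext i j; fin_cases i <;> fin_cases j <;> simp [Matrix.one_apply]
  · apply h1'
    rw [Matrix.eta_fin_two A, hb, hc, had', h]
    ext i j; fin_cases i <;> fin_cases j <;> simp [Matrix.one_apply]

-- eigenvector iff quadratic form vanishes
lemma eig_iff_q (M : Matrix (Fin 2) (Fin 2) ℝ) (x y : ℂ) (hv : ¬(x = 0 ∧ y = 0)) :
    (∃ μ : ℂ, (M.map (Complex.ofReal ·)).mulVec ![x, y] = μ • ![x, y]) ↔
    ((M 0 0 : ℂ) - (M 1 1 : ℂ)) * x * y + (M 0 1 : ℂ) * y ^ 2 - (M 1 0 : ℂ) * x ^ 2 = 0 := by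
  constructor
  · rintro ⟨μ, hμ⟩
    have h0 := congrFun hμ 0
    have h1 := congrFun hμ 1
    simp [Matrix.mulVec, dotProduct, Fin.sum_univ_two, Matrix.map_apply] at h0 h1
    linear_combination y * h0 - x * h1
  · intro hq
    by_cases hx : x = 0
    · have hy : y ≠ 0 := by tauto
      subst hx
      have hb : (M 0 1 : ℂ) = 0 := by
        have h2 : (M 0 1 : ℂ) * y ^ 2 = 0 := by linear_combination hq
        rcases mul_eq_zero.mp h2 with h | h
        · exact h
        · exact absurd (pow_eq_zero_iff (by norm_num)|>.mp h) hy
      refine ⟨(M 1 1 : ℂ), ?_⟩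
      funext i; fin_cases i <;>
        simp [Matrix.mulVec, dotProduct, Fin.sum_univ_two, Matrix.map_apply, hb]
    · refine ⟨((M 0 0 : ℂ) * x + (M 0 1 : ℂ) * y) / x, ?_⟩
      funext i; fin_cases i <;>
        simp [Matrix.mulVec, dotProduct, Fin.sum_univ_two, Matrix.map_apply]
      · field_simp
      · field_simp
        linear_combination -hq

lemma triple_of_rel (a b c d e f g h : ℝ)
    (hns : ¬(b = 0 ∧ c = 0 ∧ a - d = 0))
    (m1 : b * g = c * f) (m2 : f * (a - d) = b * (e - h)) (m3 : c * (e - h) = g * (a - d)) :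
    ∃ k : ℝ, f = k * b ∧ g = k * c ∧ e - h = k * (a - d) := by
  by_cases hb : b = 0
  · by_cases hc : c = 0
    · have had : a - d ≠ 0 := by tauto
      refine ⟨(e - h) / (a - d), ?_, ?_, by field_simp⟩
      · have hf : f = 0 := by
          have := m2; rw [hb] at this; simp at this; tauto
        rw [hf, hb]; ring
      · have hg : g = 0 := by
          have := m3; rw [hc] at this; simp at this
          rcases this with h' | h' 
          · exact h'
          · exact absurd h' had
        rw [hg, hc]; ring
    · refine ⟨g / c, ?_, by field_simp, ?_⟩
      · have hf : f = 0 := by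
          have h0 : c * f = 0 := by rw [hb] at m1; linarith
          rcases mul_eq_zero.mp h0 with h' | h'
          · exact absurd h' hc
          · exact h'
        rw [hf, hb]; ring
      · field_simp
        first | linear_combination m3 | linear_combination -m3 | linarith [m3]
  · refine ⟨f / b, by field_simp, ?_, ?_⟩
    · field_simp
      first | linear_combination m1 | linear_combination -m1 | linarith [m1]
    · field_simp
      first | linear_combination m2 | linear_combination -m2 | linarith [m2]

lemma commute_of_triple' (a b c d e f g h k : ℝ)
    (h1 : f = k * b) (h2 : g = k * c) (h3 : e - h = k * (a - d)) :
    !![a, b; c, d] * !![e, f; g, h] = !![e, f; g, h] * !![a, b; c, d] := by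
  ext i j
  fin_cases i <;> fin_cases j <;> simp [Matrix.mul_apply, Fin.sum_univ_two] <;>
    first
      | linear_combination b * h2 - c * h1
      | linear_combination (a - d) * h1 - b * h3
      | linear_combination c * h3 - (a - d) * h2
      | linear_combination c * h1 - b * h2
      | linear_combination b * h2 - c * h1 + (a-d) * h1 - b * h3 + c * h3 - (a-d)*h2

-- if B = k A + r on traceless parts, eigenvectors transfer
lemma eig_transfer (A B : Matrix (Fin 2) (Fin 2) ℝ) (k r : ℝ) (hk : k ≠ 0)
    (h1 : B 0 1 = k * A 0 1) (h2 : B 1 0 = k * A 1 0)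
    (h3 : B 0 0 = k * A 0 0 + r) (h4 : B 1 1 = k * A 1 1 + r) :
    ∀ v : Fin 2 → ℂ,
      (∃ μ : ℂ, (A.map (Complex.ofReal ·)).mulVec v = μ • v) ↔
      (∃ ν : ℂ, (B.map (Complex.ofReal ·)).mulVec v = ν • v) := by
  have hmv : ∀ v : Fin 2 → ℂ, (B.map (Complex.ofReal ·)).mulVec v
      = (k : ℂ) • (A.map (Complex.ofReal ·)).mulVec v + (r : ℂ) • v := by
    intro v
    funext i
    fin_cases i <;>
      simp [Matrix.mulVec, dotProduct, Fin.sum_univ_two, Matrix.map_apply,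
        h1, h2, h3, h4] <;> push_cast <;> ring
  intro v
  constructor
  · rintro ⟨μ, hμ⟩
    refine ⟨(k : ℂ) * μ + r, ?_⟩
    rw [hmv v, hμ, smul_smul, ← add_smul]
  · rintro ⟨ν, hν⟩
    refine ⟨(k : ℂ)⁻¹ * (ν - r), ?_⟩
    have h5 : (k : ℂ) • (A.map (Complex.ofReal ·)).mulVec v = (ν - r) • v := by
      have := hmv v
      rw [hν] at this
      rw [sub_smul]
      linear_combination (norm := module) -this
    have h6 := congrArg (fun w => (k : ℂ)⁻¹ • w) h5
    simp only [smul_smul, inv_mul_cancel₀ (by exact_mod_cast hk : (k:ℂ) ≠ 0), one_smul] at h6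
    rw [h6]

lemma pair_eq {r₁ r₂ s₁ s₂ : ℂ} (h1 : r₁ = s₁ ∨ r₁ = s₂) (h2 : r₂ = s₁ ∨ r₂ = s₂)
    (h3 : s₁ = r₁ ∨ s₁ = r₂) (h4 : s₂ = r₁ ∨ s₂ = r₂) :
    s₁ + s₂ = r₁ + r₂ ∧ s₁ * s₂ = r₁ * r₂ := by
  rcases h1 with h1 | h1 <;> rcases h2 with h2 | h2 <;> rcases h3 with h3 | h3 <;>
    rcases h4 with h4 | h4 <;> subst_vars <;> constructor <;> ring

lemma ofReal_eq (u v : ℝ) (h : (u : ℂ) = (v : ℂ)) : u = v := by exact_mod_cast h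

lemma triple_of_sameq (a b c d e f g h : ℝ)
    (hAns : ¬(b = 0 ∧ c = 0 ∧ a - d = 0))
    (hBns : ¬(f = 0 ∧ g = 0 ∧ e - h = 0))
    (Hq : ∀ x y : ℂ, ¬(x = 0 ∧ y = 0) →
      ((((a : ℂ) - d) * x * y + (b : ℂ) * y ^ 2 - (c : ℂ) * x ^ 2 = 0) ↔
       (((e : ℂ) - h) * x * y + (f : ℂ) * y ^ 2 - (g : ℂ) * x ^ 2 = 0))) :
    ∃ k : ℝ, f = k * b ∧ g = k * c ∧ e - h = k * (a - d) := by
  by_cases hc : c = 0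
  · -- then g = 0 too
    have hg : g = 0 := by
      have h1 := (Hq 1 0 (by simp)).mp (by rw [hc]; push_cast; ring)
      have h2 : (g : ℂ) = 0 := by linear_combination -h1
      exact_mod_cast h2
    by_cases had : a - d = 0
    · -- b ≠ 0 ; show e - h = 0 and take k = f / b
      have hb : b ≠ 0 := by tauto
      have heh : e - h = 0 := by
        by_contra hehne
        have hehC : ((e : ℂ) - h) ≠ 0 := by
          intro h0
          exact hehne (by exact_mod_cast h0 : e - h = (0:ℝ))
        have h2 := (Hq (-(f : ℂ) / ((e : ℂ) - h)) 1 (by simp)).mpr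
          (by rw [hg]; push_cast; field_simp; ring)
        have hadC : (a : ℂ) - d = 0 := by exact_mod_cast had
        rw [hc, hadC] at h2
        push_cast at h2
        -- h2 : 0 * _ + b * 1 - 0 * _ = 0  ⇒ b = 0
        have : (b : ℂ) = 0 := by linear_combination h2
        exact hb (by exact_mod_cast this)
      refine ⟨f / b, by field_simp, by rw [hg, hc]; ring, by rw [heh, had]; ring⟩
    · -- k = (e - h)/(a - d)
      have hadC : ((a : ℂ) - d) ≠ 0 := by
        intro h0
        exact had (by exact_mod_cast h0 : a - d = (0:ℝ))
      have h2 := (Hq (-(b : ℂ) / ((a : ℂ) - d)) 1 (by simp)).mp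
        (by rw [hc]; push_cast; field_simp; ring)
      rw [hg] at h2
      push_cast at h2
      -- h2 : (e - h) * (-b/(a-d)) + f = 0
      have hC : (f : ℂ) * ((a : ℂ) - d) = (b : ℂ) * ((e : ℂ) - h) := by
        field_simp at h2
        apply mul_left_cancel₀ hadC
        linear_combination h2
      have hR : f * (a - d) = b * (e - h) := by exact_mod_cast hC
      refine ⟨(e - h) / (a - d), ?_, by rw [hc]; simp [hg], by field_simp⟩
      field_simp
      first
        | linear_combination hR | linear_combination -hR
        | linear_combination 2 * hR | linear_combination -2 * hR
  · -- c ≠ 0, quadratic case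
    have hgne : g ≠ 0 := by
      intro hg0
      have h1 := (Hq 1 0 (by simp)).mpr (by rw [hg0]; push_cast; ring)
      have h2 : (c : ℂ) = 0 := by linear_combination -h1
      exact hc (by exact_mod_cast h2)
    have hcC : (c : ℂ) ≠ 0 := fun h0 => hc (by exact_mod_cast h0)
    have hgC : (g : ℂ) ≠ 0 := fun h0 => hgne (by exact_mod_cast h0)
    obtain ⟨z, hz⟩ := IsAlgClosed.exists_pow_nat_eq (((a : ℂ) - d) ^ 2 + 4 * b * c)
      (n := 2) (by norm_num)
    obtain ⟨w, hw⟩ := IsAlgClosed.exists_pow_nat_eq (((e : ℂ) - h) ^ 2 + 4 * f * g)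
      (n := 2) (by norm_num)
    set r₁ : ℂ := (((a : ℂ) - d) + z) / (2 * c) with hr₁
    set r₂ : ℂ := (((a : ℂ) - d) - z) / (2 * c) with hr₂
    set s₁ : ℂ := (((e : ℂ) - h) + w) / (2 * g) with hs₁
    set s₂ : ℂ := (((e : ℂ) - h) - w) / (2 * g) with hs₂
    have hfacA : ∀ t : ℂ, ((a : ℂ) - d) * t * 1 + (b : ℂ) * 1 ^ 2 - (c : ℂ) * t ^ 2
        = -(c : ℂ) * (t - r₁) * (t - r₂) := by
      intro t
      rw [hr₁, hr₂]
      field_simp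
      ring_nf
      linear_combination -hz
    have hfacB : ∀ t : ℂ, ((e : ℂ) - h) * t * 1 + (f : ℂ) * 1 ^ 2 - (g : ℂ) * t ^ 2
        = -(g : ℂ) * (t - s₁) * (t - s₂) := by
      intro t
      rw [hs₁, hs₂]
      field_simp
      ring_nf
      linear_combination -hw
    have memB : ∀ t : ℂ, t = r₁ ∨ t = r₂ → (t = s₁ ∨ t = s₂) := by
      intro t ht
      have hqA : ((a : ℂ) - d) * t * 1 + (b : ℂ) * 1 ^ 2 - (c : ℂ) * t ^ 2 = 0 := by
        rw [hfacA]
        rcases ht with ht | ht <;> rw [ht] <;> ring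
      have hqB := (Hq t 1 (by simp)).mp hqA
      rw [hfacB] at hqB
      rcases mul_eq_zero.mp hqB with h1 | h1
      · rcases mul_eq_zero.mp h1 with h2 | h2
        · exact absurd h2 (by simpa using hgC)
        · exact Or.inl (sub_eq_zero.mp h2)
      · exact Or.inr (sub_eq_zero.mp h1)
    have memA : ∀ t : ℂ, t = s₁ ∨ t = s₂ → (t = r₁ ∨ t = r₂) := by
      intro t ht
      have hqB : ((e : ℂ) - h) * t * 1 + (f : ℂ) * 1 ^ 2 - (g : ℂ) * t ^ 2 = 0 := by
        rw [hfacB]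
        rcases ht with ht | ht <;> rw [ht] <;> ring
      have hqA := (Hq t 1 (by simp)).mpr hqB
      rw [hfacA] at hqA
      rcases mul_eq_zero.mp hqA with h1 | h1
      · rcases mul_eq_zero.mp h1 with h2 | h2
        · exact absurd h2 (by simpa using hcC)
        · exact Or.inl (sub_eq_zero.mp h2)
      · exact Or.inr (sub_eq_zero.mp h1)
    obtain ⟨hsum, hprod⟩ := pair_eq (memB r₁ (Or.inl rfl)) (memB r₂ (Or.inr rfl))
      (memA s₁ (Or.inl rfl)) (memA s₂ (Or.inr rfl))
    rw [hr₁, hr₂, hs₁, hs₂] at hsum hprod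
    have hC1 : (c : ℂ) * ((e : ℂ) - h) = (g : ℂ) * ((a : ℂ) - d) := by
      field_simp at hsum
      linear_combination hsum / 2 -- guess; adjust
    have hC2 : (c : ℂ) * (f : ℂ) = (g : ℂ) * (b : ℂ) := by
      field_simp at hprod
      have h3 : (c : ℂ) * g * (c * f - g * b) = 0 := by
        linear_combination (-(1:ℂ)/4) * hprod - ((c:ℂ)^2/4) * hw + ((g:ℂ)^2/4) * hz
      rcases mul_eq_zero.mp h3 with h4 | h4
      · exact absurd h4 (mul_ne_zero hcC hgC)
      · linear_combination h4
    have hR1 : c * (e - h) = g * (a - d) := by exact_mod_cast hC1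
    have hR2 : c * f = g * b := by exact_mod_cast hC2
    refine ⟨g / c, ?_, by field_simp, ?_⟩
    · field_simp
      linear_combination hR2
    · field_simp
      linear_combination hR1

/-- Two non-identity elements of PSL(2,ℝ) (represented by SL(2,ℝ) matrices `A`, `B`
distinct from `±1`) commute (i.e. `A·B = ±B·A`) if and only if they have exactly the
same eigenvectors over ℂ, i.e. the same fixed points on the Riemann sphere. -/
theorem psl2_commute_iff_same_fixed_points (A B : Matrix (Fin 2) (Fin 2) ℝ)
    (hA : A.det = 1) (hB : B.det = 1)
    (hA1 : A ≠ 1) (hA1' : A ≠ -1) (hB1 : B ≠ 1) (hB1' : B ≠ -1) :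
    (A * B = B * A ∨ A * B = -(B * A)) ↔
      ∀ v : Fin 2 → ℂ,
        (∃ μ : ℂ, (A.map (Complex.ofReal ·)).mulVec v = μ • v) ↔
        (∃ ν : ℂ, (B.map (Complex.ofReal ·)).mulVec v = ν • v) := by
  constructor
  · rintro (hC | hC)
    · have h00 : (A * B) 0 0 = (B * A) 0 0 := by rw [hC]
      have h01 : (A * B) 0 1 = (B * A) 0 1 := by rw [hC]
      have h10 : (A * B) 1 0 = (B * A) 1 0 := by rw [hC]
      simp [Matrix.mul_apply, Fin.sum_univ_two] at h00 h01 h10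
      obtain ⟨k, hf, hg, heh⟩ := triple_of_rel (A 0 0) (A 0 1) (A 1 0) (A 1 1)
        (B 0 0) (B 0 1) (B 1 0) (B 1 1) (nonscalar A hA hA1 hA1')
        (by linear_combination h00) (by linear_combination h01) (by linear_combination h10)
      have hk : k ≠ 0 := by
        rintro rfl
        exact nonscalar B hB hB1 hB1'
          ⟨by rw [hf]; ring, by rw [hg]; ring, by rw [heh]; ring⟩
      exact eig_transfer A B k (B 0 0 - k * A 0 0) hk hf hg (by ring)
        (by linear_combination -heh)
    · exact (anti_impossible A B hA hB hC).elim
  · intro H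
    left
    have Hq : ∀ x y : ℂ, ¬(x = 0 ∧ y = 0) →
        ((((A 0 0 : ℝ) : ℂ) - (A 1 1 : ℝ)) * x * y + ((A 0 1 : ℝ) : ℂ) * y ^ 2
            - ((A 1 0 : ℝ) : ℂ) * x ^ 2 = 0 ↔
          (((B 0 0 : ℝ) : ℂ) - (B 1 1 : ℝ)) * x * y + ((B 0 1 : ℝ) : ℂ) * y ^ 2
            - ((B 1 0 : ℝ) : ℂ) * x ^ 2 = 0) := by
      intro x y hxy
      rw [← eig_iff_q A x y hxy, ← eig_iff_q B x y hxy]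
      exact H ![x, y]
    obtain ⟨k, hf, hg, heh⟩ := triple_of_sameq (A 0 0) (A 0 1) (A 1 0) (A 1 1)
      (B 0 0) (B 0 1) (B 1 0) (B 1 1) (nonscalar A hA hA1 hA1')
      (nonscalar B hB hB1 hB1') Hq
    have hcomm := commute_of_triple' (A 0 0) (A 0 1) (A 1 0) (A 1 1)
      (B 0 0) (B 0 1) (B 1 0) (B 1 1) k hf hg heh
    rw [← Matrix.eta_fin_two A, ← Matrix.eta_fin_two B] at hcomm
    exact hcomm
end

section
/- Let L := [[0,1],[−1,−1]], R := [[1,1],[−1,0]], and for z ∈ ℝ let X_z := [[0, −e^{z/2}],[e^{−z/2}, 0]]. Then any finite nonempty product of matrices, each factor being of the form R·X_z or L·X_z for some z ∈ ℝ, has strictly positive diagonal entries and nonpositive off-diagonal entries; i.e. if M = F_n·F_{n−1}·…·F_1 with each F_i ∈ {R·X_{z_i}, L·X_{z_i}}, then M₀₀ > 0, M₁₁ > 0, M₀₁ ≤ 0, and M₁₀ ≤ 0. In particular every element γ = R^{k_n}X_{z_n}⋯R^{k_1}X_{z_1} (k_i ∈ {1,2}) has the sign structure [[+,−],[−,+]].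 -/
private def GoodSign (M : Matrix (Fin 2) (Fin 2) ℝ) : Prop :=
  0 < M 0 0 ∧ 0 < M 1 1 ∧ M 0 1 ≤ 0 ∧ M 1 0 ≤ 0

private lemma goodsign_mul {A B : Matrix (Fin 2) (Fin 2) ℝ}
    (hA : GoodSign A) (hB : GoodSign B) : GoodSign (A * B) := by
  obtain ⟨a00, a11, a01, a10⟩ := hA
  obtain ⟨b00, b11, b01, b10⟩ := hB
  have h00 : (A * B) 0 0 = A 0 0 * B 0 0 + A 0 1 * B 1 0 := by
    simp [Matrix.mul_apply, Fin.sum_univ_two]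
  have h01 : (A * B) 0 1 = A 0 0 * B 0 1 + A 0 1 * B 1 1 := by
    simp [Matrix.mul_apply, Fin.sum_univ_two]
  have h10 : (A * B) 1 0 = A 1 0 * B 0 0 + A 1 1 * B 1 0 := by
    simp [Matrix.mul_apply, Fin.sum_univ_two]
  have h11 : (A * B) 1 1 = A 1 0 * B 0 1 + A 1 1 * B 1 1 := by
    simp [Matrix.mul_apply, Fin.sum_univ_two]
  refine ⟨?_, ?_, ?_, ?_⟩
  · rw [h00]; nlinarith
  · rw [h11]; nlinarith
  · rw [h01]; nlinarith
  · rw [h10]; nlinarith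

private lemma goodsign_factor (f : Matrix (Fin 2) (Fin 2) ℝ) (z : ℝ)
    (h : f = !![1, 1; -1, 0] * !![0, -Real.exp (z / 2); Real.exp (-(z / 2)), 0] ∨
      f = !![0, 1; -1, -1] * !![0, -Real.exp (z / 2); Real.exp (-(z / 2)), 0]) :
    GoodSign f := by
  have he : 0 < Real.exp (z / 2) := Real.exp_pos _
  have hf : 0 < Real.exp (-(z / 2)) := Real.exp_pos _
  rcases h with h | h <;> subst h <;>
    refine ⟨?_, ?_, ?_, ?_⟩ <;>
    simp [Matrix.mul_apply, Fin.sum_univ_two] <;> positivity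

/-- Any finite nonempty product of matrices of the form `R·X_z` or `L·X_z` has strictly
positive diagonal entries and nonpositive off-diagonal entries: the sign structure
`[[+,-],[-,+]]`. -/
theorem sign_structure (fs : List (Matrix (Fin 2) (Fin 2) ℝ)) (hne : fs ≠ [])
    (hfs : ∀ f ∈ fs, ∃ z : ℝ,
      f = !![1, 1; -1, 0] * !![0, -Real.exp (z / 2); Real.exp (-(z / 2)), 0] ∨
      f = !![0, 1; -1, -1] * !![0, -Real.exp (z / 2); Real.exp (-(z / 2)), 0]) :
    0 < fs.prod 0 0 ∧ 0 < fs.prod 1 1 ∧ fs.prod 0 1 ≤ 0 ∧ fs.prod 1 0 ≤ 0 := by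
  suffices h : GoodSign fs.prod from h
  induction fs with
  | nil => exact absurd rfl hne
  | cons a t ih =>
    obtain ⟨z, hz⟩ := hfs a List.mem_cons_self
    have ha := goodsign_factor a z hz
    rcases t with _ | ⟨b, t'⟩
    · simpa using ha
    · have ht := ih (by simp) (fun f hf => hfs f (List.mem_cons_of_mem a hf))
      rw [List.prod_cons]
      exact goodsign_mul ha ht
end

section
/- Let L := [[0,1],[−1,−1]], R := [[1,1],[−1,0]], and for z ∈ ℝ let X_z := [[0, −e^{z/2}],[e^{−z/2}, 0]]. For (z₀, z₁, z₂) ∈ ℝ³ define the matrix-valued functions P(z₀,z₁,z₂) := L·X_{z₂}·R·X_{z₀} and Q(z₀,z₁,z₂) := R·X_{z₁}·L·X_{z₀}, and let F := trace∘P and G := trace∘Q. Then for all (z₀,z₁,z₂) ∈ ℝ³: 2·(∂F/∂z₂)·(∂G/∂z₀) + 2·(∂F/∂z₀)·(∂G/∂z₁) − 2·(∂F/∂z₂)·(∂G/∂z₁) = (1/2)·trace(P·Q) − (1/2)·trace(P·Q⁻¹). That is, the Poisson bracket {trace P, trace Q} induced by {z₀,z₁} = {z₁,z₂} = {z₂,z₀}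 = 2 equals ½·G_{PQ} − ½·G_{PQ⁻¹} (the Goldman bracket). -/
set_option maxHeartbeats 1600000

lemma derivAux (a b x : ℝ) :
    deriv (fun t => a * Real.exp (-(t / 2)) + b * Real.exp (t / 2)) x
      = -(a / 2) * Real.exp (-(x / 2)) + b / 2 * Real.exp (x / 2) := by
  have h1 : HasDerivAt (fun t : ℝ => Real.exp (-(t / 2))) (Real.exp (-(x / 2)) * (-(1/2))) x := by
    have := ((hasDerivAt_id x).div_const 2).neg
    exact (Real.hasDerivAt_exp (-(x / 2))).comp x this
  have h2 : HasDerivAt (fun t : ℝ => Real.exp (t / 2)) (Real.exp (x / 2) * (1/2)) x := by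
    have := (hasDerivAt_id x).div_const 2
    exact (Real.hasDerivAt_exp (x / 2)).comp x this
  have : deriv (fun t => a * Real.exp (-(t / 2)) + b * Real.exp (t / 2)) x
      = a * (Real.exp (-(x / 2)) * -(1 / 2)) + b * (Real.exp (x / 2) * (1 / 2)) :=
    ((h1.const_mul a).add (h2.const_mul b)).deriv
  rw [this]; ring

/-- The Poisson bracket induced by `{z₀,z₁} = {z₁,z₂} = {z₂,z₀} = 2` of the geodesic
functions `F = trace(L·X_{z₂}·R·X_{z₀})` and `G = trace(R·X_{z₁}·L·X_{z₀})` of the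
once-punctured torus equals the Goldman bracket `½·trace(PQ) - ½·trace(PQ⁻¹)`. -/
theorem goldman_bracket_torus (z₀ z₁ z₂ : ℝ) :
    let L : Matrix (Fin 2) (Fin 2) ℝ := !![0, 1; -1, -1]
    let R : Matrix (Fin 2) (Fin 2) ℝ := !![1, 1; -1, 0]
    let X : ℝ → Matrix (Fin 2) (Fin 2) ℝ :=
      fun z => !![0, -Real.exp (z / 2); Real.exp (-(z / 2)), 0]
    let P : ℝ → ℝ → ℝ → Matrix (Fin 2) (Fin 2) ℝ := fun a _ c => L * X c * R * X a
    let Q : ℝ → ℝ → ℝ → Matrix (Fin 2) (Fin 2) ℝ := fun a b _ => R * X b * L * X a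
    let F : ℝ → ℝ → ℝ → ℝ := fun a b c => (P a b c).trace
    let G : ℝ → ℝ → ℝ → ℝ := fun a b c => (Q a b c).trace
    2 * deriv (fun t => F z₀ z₁ t) z₂ * deriv (fun t => G t z₁ z₂) z₀
      + 2 * deriv (fun t => F t z₁ z₂) z₀ * deriv (fun t => G z₀ t z₂) z₁
      - 2 * deriv (fun t => F z₀ z₁ t) z₂ * deriv (fun t => G z₀ t z₂) z₁
    = (1 / 2) * (P z₀ z₁ z₂ * Q z₀ z₁ z₂).trace
      - (1 / 2) * (P z₀ z₁ z₂ * (Q z₀ z₁ z₂)⁻¹).trace := by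
  intro L R X P Q F G
  have e2 := Real.exp_ne_zero (z₂ / 2)
  have e1 := Real.exp_ne_zero (z₁ / 2)
  have e0 := Real.exp_ne_zero (z₀ / 2)
  -- F as a function of z₂
  have hF2 : (fun t => F z₀ z₁ t)
      = fun t => (Real.exp (-(z₀/2)) + Real.exp (z₀/2)) * Real.exp (-(t/2))
          + Real.exp (z₀/2) * Real.exp (t/2) := by
    funext t
    simp [F, P, L, R, X, Matrix.trace_fin_two, Matrix.mul_fin_two]
    ring
  -- F as a function of z₀
  have hF0 : (fun t => F t z₁ z₂)
      = fun t => Real.exp (-(z₂/2)) * Real.exp (-(t/2))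
          + (Real.exp (-(z₂/2)) + Real.exp (z₂/2)) * Real.exp (t/2) := by
    funext t
    simp [F, P, L, R, X, Matrix.trace_fin_two, Matrix.mul_fin_two]
    ring
  -- G as a function of z₀
  have hG0 : (fun t => G t z₁ z₂)
      = fun t => (Real.exp (-(z₁/2)) + Real.exp (z₁/2)) * Real.exp (-(t/2))
          + Real.exp (z₁/2) * Real.exp (t/2) := by
    funext t
    simp [G, Q, L, R, X, Matrix.trace_fin_two, Matrix.mul_fin_two]
    try ring
  -- G as a function of z₁
  have hG1 : (fun t => G z₀ t z₂)
      = fun t => Real.exp (-(z₀/2)) * Real.exp (-(t/2))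
          + (Real.exp (-(z₀/2)) + Real.exp (z₀/2)) * Real.exp (t/2) := by
    funext t
    simp [G, Q, L, R, X, Matrix.trace_fin_two, Matrix.mul_fin_two]
    ring
  rw [hF2, hF0, hG0, hG1, derivAux, derivAux, derivAux, derivAux]
  -- inverse of Q
  have hQinv : (Q z₀ z₁ z₂)⁻¹
      = !![Real.exp (z₁/2) * Real.exp (z₀/2), Real.exp (z₁/2) * Real.exp (z₀/2);
           Real.exp (z₁/2) * Real.exp (-(z₀/2)),
           (Real.exp (-(z₁/2)) + Real.exp (z₁/2)) * Real.exp (-(z₀/2))] := by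
    apply Matrix.inv_eq_right_inv
    ext i j
    fin_cases i <;> fin_cases j <;>
      · simp [Q, L, R, X, Matrix.mul_fin_two, Matrix.one_fin_two, Real.exp_neg]
        field_simp
        ring
  rw [hQinv]
  simp [P, Q, L, R, X, Matrix.trace_fin_two, Matrix.mul_fin_two, Real.exp_neg]
  field_simp
  ring
end

section
/- Let L := [[0,1],[−1,−1]], R := [[1,1],[−1,0]], and for z ∈ ℝ let X_z := [[0, −e^{z/2}],[e^{−z/2}, 0]]. For (z₀, z₁, z₂) ∈ ℝ³ define P := L·X_{z₂}·R·X_{z₀} and Q := R·X_{z₁}·L·X_{z₀}, and let F := trace∘P, G := trace∘Q. Then for all (z₀,z₁,z₂) ∈ ℝ³: 2·(∂F/∂z₂)·(∂G/∂z₀) + 2·(∂F/∂z₀)·(∂G/∂z₁) − 2·(∂F/∂z₂)·(∂G/∂z₁) = (1/2)·trace(P)·trace(Q) − trace(P·Q⁻¹). That is, the Poisson algebra of the geodesic functions G_A = trace P and G_B = trace Q closes via the skein relation as {G_A, G_B} = ½·G_A·G_B − G_{AB⁻¹}. -/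
private lemma hd_exp (k t : ℝ) : HasDerivAt (fun t : ℝ => Real.exp (t * k)) (Real.exp (t * k) * k) t := by
  simpa [Function.comp_def] using (Real.hasDerivAt_exp (t * k)).comp t ((hasDerivAt_id t).mul_const k)

/-- The Poisson bracket induced by `{z₀,z₁} = {z₁,z₂} = {z₂,z₀} = 2` of the geodesic
functions `F = trace(L·X_{z₂}·R·X_{z₀})` and `G = trace(R·X_{z₁}·L·X_{z₀})` of the
once-punctured torus closes via the skein relation as `{G_A, G_B} = ½·G_A·G_B - G_{AB⁻¹}`. -/
theorem poisson_skein_closure_torus (z₀ z₁ z₂ : ℝ) :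
    let L : Matrix (Fin 2) (Fin 2) ℝ := !![0, 1; -1, -1]
    let R : Matrix (Fin 2) (Fin 2) ℝ := !![1, 1; -1, 0]
    let X : ℝ → Matrix (Fin 2) (Fin 2) ℝ :=
      fun z => !![0, -Real.exp (z / 2); Real.exp (-(z / 2)), 0]
    let P : ℝ → ℝ → ℝ → Matrix (Fin 2) (Fin 2) ℝ := fun a _ c => L * X c * R * X a
    let Q : ℝ → ℝ → ℝ → Matrix (Fin 2) (Fin 2) ℝ := fun a b _ => R * X b * L * X a
    let F : ℝ → ℝ → ℝ → ℝ := fun a b c => (P a b c).trace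
    let G : ℝ → ℝ → ℝ → ℝ := fun a b c => (Q a b c).trace
    2 * deriv (fun t => F z₀ z₁ t) z₂ * deriv (fun t => G t z₁ z₂) z₀
      + 2 * deriv (fun t => F t z₁ z₂) z₀ * deriv (fun t => G z₀ t z₂) z₁
      - 2 * deriv (fun t => F z₀ z₁ t) z₂ * deriv (fun t => G z₀ t z₂) z₁
    = (1 / 2) * (P z₀ z₁ z₂).trace * (Q z₀ z₁ z₂).trace
      - (P z₀ z₁ z₂ * (Q z₀ z₁ z₂)⁻¹).trace := by
  intro L R X P Q F G
  have key : ∀ x : ℝ, x * (1/2) = x/2 := fun x => by ring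
  have keyn : ∀ x : ℝ, x * (-(1/2)) = -(x/2) := fun x => by ring
  -- canonical forms of the trace functions
  have hF : ∀ a c : ℝ, F a z₁ c
      = Real.exp (-(c/2)) * Real.exp (-(a/2))
        + (Real.exp (-(c/2)) + Real.exp (c/2)) * Real.exp (a/2) := by
    intro a c
    simp [F, P, X, L, R, Matrix.mul_fin_two, Matrix.trace_fin_two_of]
    ring
  have hG : ∀ a b : ℝ, G a b z₂
      = Real.exp (-(b/2)) * Real.exp (-(a/2))
        + Real.exp (b/2) * Real.exp (-(a/2)) + Real.exp (b/2) * Real.exp (a/2) := by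
    intro a b
    simp [G, Q, X, L, R, Matrix.mul_fin_two, Matrix.trace_fin_two_of]
    ring
  -- derivatives
  have dFc : deriv (fun t => F z₀ z₁ t) z₂
      = -(Real.exp (-(z₂/2))/2) * Real.exp (-(z₀/2))
        + (-(Real.exp (-(z₂/2))/2) + Real.exp (z₂/2)/2) * Real.exp (z₀/2) := by
    have : ∀ t : ℝ, F z₀ z₁ t = Real.exp (t * (-(1/2))) * Real.exp (-(z₀/2))
        + (Real.exp (t * (-(1/2))) + Real.exp (t * (1/2))) * Real.exp (z₀/2) := by
      intro t; rw [hF, keyn, key]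
    rw [funext this]
    have h := (((hd_exp (-(1/2)) z₂).mul_const (Real.exp (-(z₀/2)))).add
      (((hd_exp (-(1/2)) z₂).add (hd_exp (1/2) z₂)).mul_const (Real.exp (z₀/2)))).deriv
    simp only [Pi.add_def] at h ⊢
    rw [h, keyn, key]; ring
  have dFa : deriv (fun t => F t z₁ z₂) z₀
      = Real.exp (-(z₂/2)) * (-(Real.exp (-(z₀/2))/2))
        + (Real.exp (-(z₂/2)) + Real.exp (z₂/2)) * (Real.exp (z₀/2)/2) := by
    have : ∀ t : ℝ, F t z₁ z₂ = Real.exp (-(z₂/2)) * Real.exp (t * (-(1/2)))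
        + (Real.exp (-(z₂/2)) + Real.exp (z₂/2)) * Real.exp (t * (1/2)) := by
      intro t; rw [hF, keyn, key]
    rw [funext this]
    have h := (((hd_exp (-(1/2)) z₀).const_mul (Real.exp (-(z₂/2)))).add
      ((hd_exp (1/2) z₀).const_mul (Real.exp (-(z₂/2)) + Real.exp (z₂/2)))).deriv
    simp only [Pi.add_def] at h ⊢
    rw [h, keyn, key]; ring
  have dGa : deriv (fun t => G t z₁ z₂) z₀
      = Real.exp (-(z₁/2)) * (-(Real.exp (-(z₀/2))/2))
        + Real.exp (z₁/2) * (-(Real.exp (-(z₀/2))/2)) + Real.exp (z₁/2) * (Real.exp (z₀/2)/2) := by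
    have : ∀ t : ℝ, G t z₁ z₂ = Real.exp (-(z₁/2)) * Real.exp (t * (-(1/2)))
        + Real.exp (z₁/2) * Real.exp (t * (-(1/2))) + Real.exp (z₁/2) * Real.exp (t * (1/2)) := by
      intro t; rw [hG, keyn, key]
    rw [funext this]
    have h := ((((hd_exp (-(1/2)) z₀).const_mul (Real.exp (-(z₁/2)))).add
      ((hd_exp (-(1/2)) z₀).const_mul (Real.exp (z₁/2)))).add
      ((hd_exp (1/2) z₀).const_mul (Real.exp (z₁/2)))).deriv
    simp only [Pi.add_def] at h ⊢
    rw [h, keyn, key]; ring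
  have dGb : deriv (fun t => G z₀ t z₂) z₁
      = -(Real.exp (-(z₁/2))/2) * Real.exp (-(z₀/2))
        + (Real.exp (z₁/2)/2) * Real.exp (-(z₀/2)) + (Real.exp (z₁/2)/2) * Real.exp (z₀/2) := by
    have : ∀ t : ℝ, G z₀ t z₂ = Real.exp (t * (-(1/2))) * Real.exp (-(z₀/2))
        + Real.exp (t * (1/2)) * Real.exp (-(z₀/2)) + Real.exp (t * (1/2)) * Real.exp (z₀/2) := by
      intro t; rw [hG, keyn, key]
    rw [funext this]
    have h := ((((hd_exp (-(1/2)) z₁).mul_const (Real.exp (-(z₀/2)))).add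
      ((hd_exp (1/2) z₁).mul_const (Real.exp (-(z₀/2))))).add
      ((hd_exp (1/2) z₁).mul_const (Real.exp (z₀/2)))).deriv
    simp only [Pi.add_def] at h ⊢
    rw [h, keyn, key]; ring
  -- the inverse of Q
  have hmul : ∀ x : ℝ, Real.exp (-(x/2)) * Real.exp (x/2) = 1 := fun x => by
    rw [← Real.exp_add]; norm_num
  have hmul' : ∀ x : ℝ, Real.exp (x/2) * Real.exp (-(x/2)) = 1 := fun x => by
    rw [← Real.exp_add]; norm_num
  have hQinv : (Q z₀ z₁ z₂)⁻¹
      = !![Real.exp (z₁/2) * Real.exp (z₀/2), Real.exp (z₁/2) * Real.exp (z₀/2);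
           Real.exp (z₁/2) * Real.exp (-(z₀/2)),
           (Real.exp (-(z₁/2)) + Real.exp (z₁/2)) * Real.exp (-(z₀/2))] := by
    apply Matrix.inv_eq_right_inv
    simp [Q, X, L, R, Matrix.mul_fin_two]
    ring_nf
    simp only [← Real.exp_add]
    norm_num
    rw [Matrix.one_fin_two]
  rw [dFc, dFa, dGa, dGb, hQinv]
  show _ = (1/2) * F z₀ z₁ z₂ * G z₀ z₁ z₂ - _
  rw [hF, hG]
  simp only [P, X, L, R, Matrix.mul_fin_two, Matrix.trace_fin_two_of, Matrix.trace_fin_two]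
  norm_num [Matrix.mul_apply, Fin.sum_univ_two]
  simp only [Real.exp_neg]
  have h0 := Real.exp_ne_zero (z₀/2)
  have h1 := Real.exp_ne_zero (z₁/2)
  have h2 := Real.exp_ne_zero (z₂/2)
  field_simp
  ring
end

section
/- Let A = ℝ[x, y, z] be the polynomial algebra in three variables over ℝ (MvPolynomial (Fin 3) ℝ with x = X 0, y = X 1, z = X 2), and define the bracket B : A × A → A by B(f,g) := (½xy − z)·(∂ₓf·∂ᵧg − ∂ᵧf·∂ₓg) + (½yz − x)·(∂ᵧf·∂_zg − ∂_zf·∂ᵧg) + (½zx − y)·(∂_zf·∂ₓg − ∂ₓf·∂_zg), so that B(x,y) = ½xy − z, B(y,z) = ½yz − x, B(z,x) = ½zx − y. Then the element C := x² + y² + z² − x·y·z is central: B(C, f) = 0 for every polynomial f ∈ A. -/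
open MvPolynomial

/-- In the Poisson algebra ℝ[x,y,z] with bracket determined by
`B(x,y) = ½xy - z`, `B(y,z) = ½yz - x`, `B(z,x) = ½zx - y` (extended via formal partial
derivatives), the element `x² + y² + z² - x·y·z` is central. -/
theorem casimir_central :
    let x : MvPolynomial (Fin 3) ℝ := X 0
    let y : MvPolynomial (Fin 3) ℝ := X 1
    let z : MvPolynomial (Fin 3) ℝ := X 2
    let dx := pderiv (0 : Fin 3)
    let dy := pderiv (1 : Fin 3)
    let dz := pderiv (2 : Fin 3)
    let B : MvPolynomial (Fin 3) ℝ → MvPolynomial (Fin 3) ℝ → MvPolynomial (Fin 3) ℝ :=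
      fun f g =>
        (C (1 / 2 : ℝ) * x * y - z) * (dx f * dy g - dy f * dx g) +
        (C (1 / 2 : ℝ) * y * z - x) * (dy f * dz g - dz f * dy g) +
        (C (1 / 2 : ℝ) * z * x - y) * (dz f * dx g - dx f * dz g)
    B x y = C (1 / 2 : ℝ) * x * y - z ∧
    B y z = C (1 / 2 : ℝ) * y * z - x ∧
    B z x = C (1 / 2 : ℝ) * z * x - y ∧
    ∀ f : MvPolynomial (Fin 3) ℝ, B (x ^ 2 + y ^ 2 + z ^ 2 - x * y * z) f = 0 := by
  intro x y z dx dy dz B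
  have h : ∀ i j : Fin 3, (pderiv i) (X j : MvPolynomial (Fin 3) ℝ) =
      if i = j then 1 else 0 := by
    intro i j
    rw [pderiv_X]
    by_cases hij : i = j <;> simp [hij, Pi.single_apply]
  have hC : (2 : MvPolynomial (Fin 3) ℝ) * C (1 / 2 : ℝ) = 1 := by
    rw [show ((2 : MvPolynomial (Fin 3) ℝ)) = C (2 : ℝ) from (map_ofNat C 2).symm, ← C_mul]
    norm_num
  refine ⟨?_, ?_, ?_, fun f => ?_⟩ <;>
      simp only [B, x, y, z, dx, dy, dz, map_add, map_sub, pderiv_mul, pderiv_pow, h] <;>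
      norm_num [Fin.ext_iff]
  linear_combination
    ((X 0 * X 2 ^ 2 - X 0 * X 1 ^ 2) * pderiv 0 f +
      (X 0 ^ 2 * X 1 - X 1 * X 2 ^ 2) * pderiv 1 f +
      (X 1 ^ 2 * X 2 - X 0 ^ 2 * X 2) * pderiv 2 f) * hC
end
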